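/- For a lattice L ⊆ ℝⁿ, a fixed vector u ∈ ℝⁿ, ε ∈ (0,1), and real σ > 2·η_ε(L), we have Σ_{x ∈ L*} ρ_{1/σ}(x - u) < ρ_{1/σ}(u - κ(u)) + ε, where κ(u) is a closest vector to u in the dual lattice L*. -/

import Mathlib

open Real

noncomputable section

/-- The dual of a point set `L ⊆ ℝⁿ`:
`L* = {y : ∀ x ∈ L, ⟨y, x⟩ ∈ ℤ}`. -/
def dualLattice {n : ℕ} (L : Set (EuclideanSpace ℝ (Fin n))) :
    Set (EuclideanSpace ℝ (Fin n)) :=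
  {y | ∀ x ∈ L, ∃ k : ℤ, (inner ℝ y x : ℝ) = (k : ℝ)}

/-- The smoothing parameter `η_ε(L)`: the smallest `s > 0` such that
`ρ_{1/s}(L* \ {0}) = Σ_{x ∈ L*\{0}} exp(-π‖x‖²s²) ≤ ε`. -/
def smoothingEta {n : ℕ} (ε : ℝ) (L : Set (EuclideanSpace ℝ (Fin n))) : ℝ :=
  sInf {s : ℝ | 0 < s ∧
    ∑' x : {v : EuclideanSpace ℝ (Fin n) // v ∈ dualLattice L ∧ v ≠ 0},
      Real.exp (-π * ‖(x : EuclideanSpace ℝ (Fin n))‖ ^ 2 * s ^ 2) ≤ ε}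

end


open Filter Topology

section AuxLemmas

lemma aux_summable_int {β : ℝ} (hβ : 0 < β) :
    Summable fun m : ℤ => Real.exp (-β * (m : ℝ) ^ 2) := by
  have key : Summable fun m : ℕ => Real.exp (-β * (m : ℝ) ^ 2) := by
    have h1 : Real.exp (-β) < 1 := Real.exp_lt_one_iff.mpr (by linarith)
    refine Summable.of_nonneg_of_le (fun m => (Real.exp_pos _).le) (fun m => ?_)
      (summable_geometric_of_lt_one (Real.exp_pos _).le h1)
    calc Real.exp (-β * (m : ℝ) ^ 2) = Real.exp (-β) ^ (m ^ 2) := by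
          rw [show -β * (m : ℝ) ^ 2 = ((m ^ 2 : ℕ) : ℝ) * (-β) by push_cast; ring,
            Real.exp_nat_mul]
      _ ≤ Real.exp (-β) ^ m :=
          pow_le_pow_of_le_one (Real.exp_pos _).le h1.le (Nat.le_self_pow two_ne_zero m)
  apply Summable.of_nat_of_neg
  · exact key
  · simpa using key

lemma aux_summable_pi (n : ℕ) {β : ℝ} (hβ : 0 < β) :
    Summable fun m : Fin n → ℤ => Real.exp (-β * ∑ i, ((m i : ℝ)) ^ 2) := by
  induction n with
  | zero => exact .of_finite
  | succ n ih =>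
      have h2 := (aux_summable_int hβ).mul_of_nonneg ih
        (fun _ => (Real.exp_pos _).le) (fun _ => (Real.exp_pos _).le)
      apply ((Fin.consEquiv fun _ : Fin (n + 1) => ℤ).summable_iff).mp
      refine h2.congr fun p => ?_
      simp only [Function.comp, Fin.consEquiv_apply, Fin.sum_univ_succ, Fin.cons_zero,
        Fin.cons_succ, mul_add, Real.exp_add]

variable {n : ℕ}

lemma aux_mem_dual_sub {L : Set (EuclideanSpace ℝ (Fin n))} {x k : EuclideanSpace ℝ (Fin n)}
    (hx : x ∈ dualLattice L) (hk : k ∈ dualLattice L) : x - k ∈ dualLattice L := by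
  intro z hz
  obtain ⟨a, ha⟩ := hx z hz
  obtain ⟨c, hc⟩ := hk z hz
  exact ⟨a - c, by rw [inner_sub_left, ha, hc]; push_cast; ring⟩

lemma aux_mem_dual_add {L : Set (EuclideanSpace ℝ (Fin n))} {x k : EuclideanSpace ℝ (Fin n)}
    (hx : x ∈ dualLattice L) (hk : k ∈ dualLattice L) : x + k ∈ dualLattice L := by
  intro z hz
  obtain ⟨a, ha⟩ := hx z hz
  obtain ⟨c, hc⟩ := hk z hz
  exact ⟨a + c, by rw [inner_add_left, ha, hc]; push_cast; ring⟩

lemma aux_summable_dual (L : Submodule ℤ (EuclideanSpace ℝ (Fin n)))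
    (b : Module.Basis (Fin n) ℝ (EuclideanSpace ℝ (Fin n)))
    (hb : Submodule.span ℤ (Set.range ⇑b) = L)
    (c : EuclideanSpace ℝ (Fin n)) (t : ℝ) (ht : 0 < t) :
    Summable fun x : dualLattice (L : Set (EuclideanSpace ℝ (Fin n))) =>
      Real.exp (-π * ‖(x : EuclideanSpace ℝ (Fin n)) - c‖ ^ 2 * t) := by
  classical
  have hbL : ∀ i, b i ∈ (L : Set (EuclideanSpace ℝ (Fin n))) := fun i => by
    rw [← hb]; exact Submodule.subset_span (Set.mem_range_self i)
  set φ : dualLattice (L : Set (EuclideanSpace ℝ (Fin n))) → (Fin n → ℤ) :=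
    fun x i => round (inner ℝ (x : EuclideanSpace ℝ (Fin n)) (b i) : ℝ) with hφ
  have hval : ∀ (x : dualLattice (L : Set (EuclideanSpace ℝ (Fin n)))) (i : Fin n),
      ((φ x i : ℝ)) = inner ℝ (x : EuclideanSpace ℝ (Fin n)) (b i) := by
    intro x i
    obtain ⟨m, hm⟩ := x.2 (b i) (hbL i)
    show ((round (inner ℝ (x : EuclideanSpace ℝ (Fin n)) (b i) : ℝ) : ℤ) : ℝ) = _
    rw [hm, round_intCast]
  have hinj : Function.Injective φ := by
    intro x y hxy
    have hiz : ∀ i, (inner ℝ ((x : EuclideanSpace ℝ (Fin n)) - y) (b i) : ℝ) = 0 := by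
      intro i
      have hxyi : φ x i = φ y i := congrFun hxy i
      rw [inner_sub_left, ← hval x i, ← hval y i, hxyi, sub_self]
    have hz : (x : EuclideanSpace ℝ (Fin n)) - y = 0 := by
      set z : EuclideanSpace ℝ (Fin n) := (x : EuclideanSpace ℝ (Fin n)) - y with hzdef
      have hrepr : ∑ i, b.repr z i • b i = z := b.sum_repr z
      have hzz : (inner ℝ z z : ℝ) = 0 := by
        nth_rewrite 2 [← hrepr]
        rw [inner_sum]
        refine Finset.sum_eq_zero fun i _ => ?_
        rw [real_inner_smul_right, hiz, mul_zero]
      exact inner_self_eq_zero.mp hzz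
    exact Subtype.ext (by rwa [sub_eq_zero] at hz)
  set C2 : ℝ := (∑ i, ‖b i‖ ^ 2) + 1 with hC2
  have hC2pos : 0 < C2 := by positivity
  have hsum_sq : ∀ x : dualLattice (L : Set (EuclideanSpace ℝ (Fin n))),
      (∑ i, ((φ x i : ℝ)) ^ 2) ≤ C2 * ‖(x : EuclideanSpace ℝ (Fin n))‖ ^ 2 := by
    intro x
    have h1 : ∀ i : Fin n, ((φ x i : ℝ)) ^ 2 ≤
        ‖(x : EuclideanSpace ℝ (Fin n))‖ ^ 2 * ‖b i‖ ^ 2 := by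
      intro i
      rw [hval x i]
      have habs := abs_real_inner_le_norm (x : EuclideanSpace ℝ (Fin n)) (b i)
      nlinarith [abs_nonneg (inner ℝ (x : EuclideanSpace ℝ (Fin n)) (b i) : ℝ),
        sq_abs (inner ℝ (x : EuclideanSpace ℝ (Fin n)) (b i) : ℝ),
        norm_nonneg (x : EuclideanSpace ℝ (Fin n)), norm_nonneg (b i)]
    calc (∑ i, ((φ x i : ℝ)) ^ 2)
        ≤ ∑ i, ‖(x : EuclideanSpace ℝ (Fin n))‖ ^ 2 * ‖b i‖ ^ 2 :=
          Finset.sum_le_sum fun i _ => h1 i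
      _ = (∑ i, ‖b i‖ ^ 2) * ‖(x : EuclideanSpace ℝ (Fin n))‖ ^ 2 := by
          rw [Finset.sum_mul]; exact Finset.sum_congr rfl fun i _ => mul_comm _ _
      _ ≤ C2 * ‖(x : EuclideanSpace ℝ (Fin n))‖ ^ 2 := by
          nlinarith [sq_nonneg ‖(x : EuclideanSpace ℝ (Fin n))‖]
  set β : ℝ := π * t / (4 * C2) with hβdef
  have hβ : 0 < β := by positivity
  refine Summable.of_nonneg_of_le (fun x => (Real.exp_pos _).le) (fun x => ?_)
    (((aux_summable_pi n hβ).mul_left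
      (Real.exp (π * ‖c‖ ^ 2 * t))).comp_injective hinj)
  have hub := hsum_sq x
  have htri : ‖(x : EuclideanSpace ℝ (Fin n))‖ ≤
      ‖(x : EuclideanSpace ℝ (Fin n)) - c‖ + ‖c‖ := by
    calc ‖(x : EuclideanSpace ℝ (Fin n))‖
        = ‖((x : EuclideanSpace ℝ (Fin n)) - c) + c‖ := by rw [sub_add_cancel]
      _ ≤ _ := norm_add_le _ _
  show Real.exp (-π * ‖(x : EuclideanSpace ℝ (Fin n)) - c‖ ^ 2 * t) ≤
      Real.exp (π * ‖c‖ ^ 2 * t) * Real.exp (-β * ∑ i, ((φ x i : ℝ)) ^ 2)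
  rw [← Real.exp_add]
  apply Real.exp_le_exp.mpr
  have hkey : (∑ i, ((φ x i : ℝ)) ^ 2) / (4 * C2) - ‖c‖ ^ 2 ≤
      ‖(x : EuclideanSpace ℝ (Fin n)) - c‖ ^ 2 := by
    have h3 : (∑ i, ((φ x i : ℝ)) ^ 2) / (4 * C2) ≤
        ‖(x : EuclideanSpace ℝ (Fin n))‖ ^ 2 / 4 := by
      rw [div_le_div_iff₀ (by positivity) (by norm_num)]
      nlinarith [hub, hC2pos]
    have h4 : ‖(x : EuclideanSpace ℝ (Fin n))‖ ^ 2 / 4 - ‖c‖ ^ 2 ≤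
        ‖(x : EuclideanSpace ℝ (Fin n)) - c‖ ^ 2 := by
      nlinarith [htri, norm_nonneg ((x : EuclideanSpace ℝ (Fin n)) - c), norm_nonneg c,
        norm_nonneg (x : EuclideanSpace ℝ (Fin n)),
        sq_nonneg (‖(x : EuclideanSpace ℝ (Fin n)) - c‖ - ‖c‖)]
    linarith
  have hπt : (0 : ℝ) < π * t := mul_pos pi_pos ht
  have hmul := mul_le_mul_of_nonneg_left hkey hπt.le
  rw [hβdef]
  have hfield : π * t / (4 * C2) * (∑ i, ((φ x i : ℝ)) ^ 2) =
      π * t * ((∑ i, ((φ x i : ℝ)) ^ 2) / (4 * C2)) := by ring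
  nlinarith [hmul]

end AuxLemmas

section Main

variable {n : ℕ}

lemma aux_summable_A (L : Submodule ℤ (EuclideanSpace ℝ (Fin n)))
    (b : Module.Basis (Fin n) ℝ (EuclideanSpace ℝ (Fin n)))
    (hb : Submodule.span ℤ (Set.range ⇑b) = L) (s : ℝ) (hs : 0 < s) :
    Summable fun v : {v : EuclideanSpace ℝ (Fin n) //
        v ∈ dualLattice (L : Set (EuclideanSpace ℝ (Fin n))) ∧ v ≠ 0} =>
      Real.exp (-π * ‖(v : EuclideanSpace ℝ (Fin n))‖ ^ 2 * s ^ 2) := by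
  have h := aux_summable_dual L b hb 0 (s ^ 2) (by positivity)
  have hi : Function.Injective
      (fun v : {v : EuclideanSpace ℝ (Fin n) //
          v ∈ dualLattice (L : Set (EuclideanSpace ℝ (Fin n))) ∧ v ≠ 0} =>
        (⟨v.1, v.2.1⟩ : dualLattice (L : Set (EuclideanSpace ℝ (Fin n))))) := by
    intro v w hvw
    apply Subtype.ext
    have h2 : (⟨v.1, v.2.1⟩ : dualLattice (L : Set (EuclideanSpace ℝ (Fin n)))).val =
        (⟨w.1, w.2.1⟩ : dualLattice (L : Set (EuclideanSpace ℝ (Fin n)))).val :=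
      congrArg Subtype.val hvw
    exact h2
  have h2 := h.comp_injective hi
  simpa [Function.comp_def, sub_zero] using h2

/-- For a (full-rank) lattice `L ⊆ ℝⁿ`, `u ∈ ℝⁿ`, `ε ∈ (0,1)` and `σ > 2·η_ε(L)`:
`Σ_{x ∈ L*} ρ_{1/σ}(x - u) < ρ_{1/σ}(u - κ(u)) + ε`, where `κ(u)` is a closest vector
to `u` in `L*` and `ρ_{1/σ}(v) = exp(-π‖v‖²σ²)`. -/
theorem stmt_7 (n : ℕ) (L : Submodule ℤ (EuclideanSpace ℝ (Fin n)))
    (b : Module.Basis (Fin n) ℝ (EuclideanSpace ℝ (Fin n)))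
    (hb : Submodule.span ℤ (Set.range ⇑b) = L)
    (u : EuclideanSpace ℝ (Fin n)) (ε σ : ℝ) (hε : ε ∈ Set.Ioo (0 : ℝ) 1)
    (hσ : 2 * smoothingEta ε (L : Set (EuclideanSpace ℝ (Fin n))) < σ)
    (k : EuclideanSpace ℝ (Fin n))
    (hk : k ∈ dualLattice (L : Set (EuclideanSpace ℝ (Fin n))))
    (hkc : ∀ y ∈ dualLattice (L : Set (EuclideanSpace ℝ (Fin n))), ‖k - u‖ ≤ ‖y - u‖) :
    ∑' x : dualLattice (L : Set (EuclideanSpace ℝ (Fin n))),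
        Real.exp (-π * ‖(x : EuclideanSpace ℝ (Fin n)) - u‖ ^ 2 * σ ^ 2) <
      Real.exp (-π * ‖u - k‖ ^ 2 * σ ^ 2) + ε := by
  obtain ⟨hε0, hε1⟩ := hε
  set S : Set ℝ := {s : ℝ | 0 < s ∧
    ∑' x : {v : EuclideanSpace ℝ (Fin n) //
        v ∈ dualLattice (L : Set (EuclideanSpace ℝ (Fin n))) ∧ v ≠ 0},
      Real.exp (-π * ‖(x : EuclideanSpace ℝ (Fin n))‖ ^ 2 * s ^ 2) ≤ ε} with hS
  have hetaS : smoothingEta ε (L : Set (EuclideanSpace ℝ (Fin n))) = sInf S := rfl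
  have hη0 : 0 ≤ smoothingEta ε (L : Set (EuclideanSpace ℝ (Fin n))) := by
    rw [hetaS]
    exact Real.sInf_nonneg fun x hx => hx.1.le
  have hσ0 : 0 < σ := by linarith
  -- S is nonempty
  have hSne : S.Nonempty := by
    have htend : Tendsto (fun N : ℕ => ∑' v : {v : EuclideanSpace ℝ (Fin n) //
        v ∈ dualLattice (L : Set (EuclideanSpace ℝ (Fin n))) ∧ v ≠ 0},
        Real.exp (-π * ‖(v : EuclideanSpace ℝ (Fin n))‖ ^ 2 * ((N : ℝ) + 1) ^ 2))
        atTop (𝓝 0) := by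
      rw [show (0 : ℝ) = ∑' _ : {v : EuclideanSpace ℝ (Fin n) //
          v ∈ dualLattice (L : Set (EuclideanSpace ℝ (Fin n))) ∧ v ≠ 0}, (0 : ℝ) from
        tsum_zero.symm]
      apply tendsto_tsum_of_dominated_convergence
        (bound := fun v : {v : EuclideanSpace ℝ (Fin n) //
            v ∈ dualLattice (L : Set (EuclideanSpace ℝ (Fin n))) ∧ v ≠ 0} =>
          Real.exp (-π * ‖(v : EuclideanSpace ℝ (Fin n))‖ ^ 2 * (1 : ℝ) ^ 2))
      · exact aux_summable_A L b hb 1 one_pos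
      · intro v
        have hv : 0 < ‖(v : EuclideanSpace ℝ (Fin n))‖ := norm_pos_iff.mpr v.2.2
        have h1 : Tendsto (fun N : ℕ => ((N : ℝ) + 1) ^ 2) atTop atTop := by
          apply tendsto_atTop_mono (fun N : ℕ =>
            le_self_pow₀ (by linarith [Nat.cast_nonneg (α := ℝ) N] : (1:ℝ) ≤ (N : ℝ) + 1)
              two_ne_zero)
          exact tendsto_atTop_add_const_right atTop 1 tendsto_natCast_atTop_atTop
        have h2 : Tendsto (fun N : ℕ =>
            -π * ‖(v : EuclideanSpace ℝ (Fin n))‖ ^ 2 * ((N : ℝ) + 1) ^ 2) atTop atBot :=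
          h1.const_mul_atTop_of_neg (by
            have hvv := mul_pos pi_pos (pow_pos hv 2)
            linarith)
        exact Real.tendsto_exp_atBot.comp h2
      · filter_upwards with N
        intro v
        rw [Real.norm_of_nonneg (Real.exp_pos _).le]
        apply Real.exp_le_exp.mpr
        have h1 : (1 : ℝ) ≤ ((N : ℝ) + 1) ^ 2 := by
          nlinarith [Nat.cast_nonneg (α := ℝ) N]
        nlinarith [mul_le_mul_of_nonneg_left h1
          (by positivity : (0:ℝ) ≤ π * ‖(v : EuclideanSpace ℝ (Fin n))‖ ^ 2)]
    obtain ⟨N, hN⟩ := (htend.eventually_lt_const hε0).exists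
    exact ⟨(N : ℝ) + 1, by positivity, hN.le⟩
  -- extract s ∈ S with s < σ/2
  have hbdd : BddBelow S := ⟨0, fun x hx => hx.1.le⟩
  have hlt : sInf S < σ / 2 := by rw [← hetaS]; linarith
  obtain ⟨s, hsS, hs2⟩ := (csInf_lt_iff hbdd hSne).mp hlt
  have hs0 : 0 < s := hsS.1
  -- summabilities
  have hf : Summable fun x : dualLattice (L : Set (EuclideanSpace ℝ (Fin n))) =>
      Real.exp (-π * ‖(x : EuclideanSpace ℝ (Fin n)) - u‖ ^ 2 * σ ^ 2) :=
    aux_summable_dual L b hb u (σ ^ 2) (pow_pos hσ0 2)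
  have hg : Summable fun x : dualLattice (L : Set (EuclideanSpace ℝ (Fin n))) =>
      Real.exp (-π * ‖(x : EuclideanSpace ℝ (Fin n)) - k‖ ^ 2 * (σ / 2) ^ 2) :=
    aux_summable_dual L b hb k ((σ / 2) ^ 2) (pow_pos (by linarith) 2)
  set b₀ : dualLattice (L : Set (EuclideanSpace ℝ (Fin n))) := ⟨k, hk⟩ with hb₀
  -- split off the term at b₀
  have hsplit : (∑' x : dualLattice (L : Set (EuclideanSpace ℝ (Fin n))),
      Real.exp (-π * ‖(x : EuclideanSpace ℝ (Fin n)) - u‖ ^ 2 * σ ^ 2)) =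
      Real.exp (-π * ‖k - u‖ ^ 2 * σ ^ 2) +
      ∑' x : ({b₀}ᶜ : Set (dualLattice (L : Set (EuclideanSpace ℝ (Fin n))))),
        Real.exp (-π * ‖((x : dualLattice (L : Set (EuclideanSpace ℝ (Fin n)))) :
          EuclideanSpace ℝ (Fin n)) - u‖ ^ 2 * σ ^ 2) := by
    rw [← Summable.tsum_subtype_add_tsum_subtype_compl hf {b₀},
      tsum_singleton b₀ (fun y : dualLattice (L : Set (EuclideanSpace ℝ (Fin n))) =>
        Real.exp (-π * ‖(y : EuclideanSpace ℝ (Fin n)) - u‖ ^ 2 * σ ^ 2))]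
  -- the remaining sum is < ε
  have hcompl : (∑' x : ({b₀}ᶜ : Set (dualLattice (L : Set (EuclideanSpace ℝ (Fin n))))),
      Real.exp (-π * ‖((x : dualLattice (L : Set (EuclideanSpace ℝ (Fin n)))) :
        EuclideanSpace ℝ (Fin n)) - u‖ ^ 2 * σ ^ 2)) < ε := by
    have hfc := hf.comp_injective
      (Subtype.coe_injective : Function.Injective
        (Subtype.val : ({b₀}ᶜ : Set (dualLattice (L : Set (EuclideanSpace ℝ (Fin n))))) → _))
    have hgc := hg.comp_injective
      (Subtype.coe_injective : Function.Injective
        (Subtype.val : ({b₀}ᶜ : Set (dualLattice (L : Set (EuclideanSpace ℝ (Fin n))))) → _))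
    have hstep1 : (∑' x : ({b₀}ᶜ : Set (dualLattice (L : Set (EuclideanSpace ℝ (Fin n))))),
        Real.exp (-π * ‖((x : dualLattice (L : Set (EuclideanSpace ℝ (Fin n)))) :
          EuclideanSpace ℝ (Fin n)) - u‖ ^ 2 * σ ^ 2)) ≤
        ∑' x : ({b₀}ᶜ : Set (dualLattice (L : Set (EuclideanSpace ℝ (Fin n))))),
        Real.exp (-π * ‖((x : dualLattice (L : Set (EuclideanSpace ℝ (Fin n)))) :
          EuclideanSpace ℝ (Fin n)) - k‖ ^ 2 * (σ / 2) ^ 2) := by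
      refine Summable.tsum_le_tsum (fun x => ?_) hfc hgc
      set y : EuclideanSpace ℝ (Fin n) :=
        ((x : dualLattice (L : Set (EuclideanSpace ℝ (Fin n)))) : EuclideanSpace ℝ (Fin n))
        with hy
      have hyD : y ∈ dualLattice (L : Set (EuclideanSpace ℝ (Fin n))) :=
        (x : dualLattice (L : Set (EuclideanSpace ℝ (Fin n)))).2
      have h2le : ‖y - k‖ ≤ 2 * ‖y - u‖ := by
        have ht1 : ‖y - k‖ ≤ ‖y - u‖ + ‖u - k‖ := by
          calc ‖y - k‖ = ‖(y - u) + (u - k)‖ := by abel_nf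
            _ ≤ ‖y - u‖ + ‖u - k‖ := norm_add_le _ _
        have ht2 : ‖u - k‖ = ‖k - u‖ := norm_sub_rev u k
        have ht3 := hkc y hyD
        linarith
      apply Real.exp_le_exp.mpr
      have h4 : ‖y - k‖ ^ 2 ≤ 4 * ‖y - u‖ ^ 2 := by
        nlinarith [norm_nonneg (y - k), norm_nonneg (y - u)]
      nlinarith [pi_pos, sq_nonneg σ, mul_le_mul_of_nonneg_left h4 pi_pos.le,
        mul_le_mul_of_nonneg_right (mul_le_mul_of_nonneg_left h4 pi_pos.le) (sq_nonneg σ)]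
    -- reindex the (σ/2)-sum over the nonzero dual vectors
    let A := {v : EuclideanSpace ℝ (Fin n) //
        v ∈ dualLattice (L : Set (EuclideanSpace ℝ (Fin n))) ∧ v ≠ 0}
    let e : A ≃ ({b₀}ᶜ : Set (dualLattice (L : Set (EuclideanSpace ℝ (Fin n))))) :=
      { toFun := fun v => ⟨⟨v.1 + k, aux_mem_dual_add v.2.1 hk⟩, by
          simp only [Set.mem_compl_iff, Set.mem_singleton_iff]
          intro hcon
          apply v.2.2
          have h5 : v.1 + k = k := congrArg Subtype.val hcon
          have : v.1 = (v.1 + k) - k := by abel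
          rw [this, h5, sub_self]⟩
        invFun := fun x => ⟨((x : dualLattice (L : Set (EuclideanSpace ℝ (Fin n)))) :
            EuclideanSpace ℝ (Fin n)) - k,
          ⟨aux_mem_dual_sub (x : dualLattice (L : Set (EuclideanSpace ℝ (Fin n)))).2 hk, by
            intro hcon
            apply x.2
            simp only [Set.mem_singleton_iff]
            apply Subtype.ext
            show ((x : dualLattice (L : Set (EuclideanSpace ℝ (Fin n)))) :
              EuclideanSpace ℝ (Fin n)) = k
            have := sub_eq_zero.mp hcon
            exact this⟩⟩
        left_inv := fun v => by
          apply Subtype.ext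
          show (v.1 + k) - k = v.1
          abel
        right_inv := fun x => by
          apply Subtype.ext
          apply Subtype.ext
          show (((x : dualLattice (L : Set (EuclideanSpace ℝ (Fin n)))) :
            EuclideanSpace ℝ (Fin n)) - k) + k = _
          abel }
    have hstep2 : (∑' x : ({b₀}ᶜ : Set (dualLattice (L : Set (EuclideanSpace ℝ (Fin n))))),
        Real.exp (-π * ‖((x : dualLattice (L : Set (EuclideanSpace ℝ (Fin n)))) :
          EuclideanSpace ℝ (Fin n)) - k‖ ^ 2 * (σ / 2) ^ 2)) =
        ∑' v : A, Real.exp (-π * ‖(v : EuclideanSpace ℝ (Fin n))‖ ^ 2 * (σ / 2) ^ 2) := by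
      rw [← Equiv.tsum_eq e]
      apply tsum_congr
      intro v
      show Real.exp (-π * ‖(v.1 + k) - k‖ ^ 2 * (σ / 2) ^ 2) =
        Real.exp (-π * ‖v.1‖ ^ 2 * (σ / 2) ^ 2)
      rw [add_sub_cancel_right]
    have hstep3 : (∑' v : A,
        Real.exp (-π * ‖(v : EuclideanSpace ℝ (Fin n))‖ ^ 2 * (σ / 2) ^ 2)) < ε := by
      rcases isEmpty_or_nonempty A with hA | hA
      · rw [tsum_empty]; exact hε0
      · have hsum1 := aux_summable_A L b hb (σ / 2) (by linarith)
        have hsum2 := aux_summable_A L b hb s hs0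
        have hchain : (∑' v : A,
            Real.exp (-π * ‖(v : EuclideanSpace ℝ (Fin n))‖ ^ 2 * (σ / 2) ^ 2)) <
            ∑' v : A, Real.exp (-π * ‖(v : EuclideanSpace ℝ (Fin n))‖ ^ 2 * s ^ 2) := by
          have i : A := Classical.arbitrary A
          refine Summable.tsum_lt_tsum (fun v => ?_) (i := i) ?_ hsum1 hsum2
          · apply Real.exp_le_exp.mpr
            have hss : s ^ 2 ≤ (σ / 2) ^ 2 := by nlinarith
            nlinarith [mul_le_mul_of_nonneg_left hss
              (by positivity : (0:ℝ) ≤ π * ‖(v : EuclideanSpace ℝ (Fin n))‖ ^ 2)]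
          · apply Real.exp_lt_exp.mpr
            have hi : 0 < ‖(i : EuclideanSpace ℝ (Fin n))‖ := norm_pos_iff.mpr i.2.2
            have hss : s ^ 2 < (σ / 2) ^ 2 := by nlinarith
            nlinarith [mul_lt_mul_of_pos_left hss
              (by positivity : (0:ℝ) < π * ‖(i : EuclideanSpace ℝ (Fin n))‖ ^ 2)]
        exact hchain.trans_le hsS.2
    calc (∑' x : ({b₀}ᶜ : Set (dualLattice (L : Set (EuclideanSpace ℝ (Fin n))))),
        Real.exp (-π * ‖((x : dualLattice (L : Set (EuclideanSpace ℝ (Fin n)))) :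
          EuclideanSpace ℝ (Fin n)) - u‖ ^ 2 * σ ^ 2))
        ≤ _ := hstep1
      _ = _ := hstep2
      _ < ε := hstep3
  rw [hsplit, show ‖k - u‖ = ‖u - k‖ from norm_sub_rev k u]
  linarith

end Main
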